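/- For real u, v with u > 1/√3, u ≠ v, v > 0, the equation (u+v)/(2√(v²+1)) = u/√(u²+1) holds if and only if v = u(3 − u²)/(3u² − 1). -/

import Mathlib

/-- For `u > 1/√3`, `v > 0`, `u ≠ v`, the equality of the two perpendicular
distances `(u+v)/(2√(v²+1)) = u/√(u²+1)` holds iff `v = u(3−u²)/(3u²−1)`. -/
theorem kite_perpendicular_equality (u v : ℝ)
    (hu : 1 / Real.sqrt 3 < u) (hv : 0 < v) (huv : u ≠ v) :
    (u + v) / (2 * Real.sqrt (v ^ 2 + 1)) = u / Real.sqrt (u ^ 2 + 1) ↔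
      v = u * (3 - u ^ 2) / (3 * u ^ 2 - 1) := by
  have hs3 : (0:ℝ) < Real.sqrt 3 := Real.sqrt_pos.mpr (by norm_num)
  have hu0 : 0 < u := lt_trans (by positivity) hu
  have hu3 : 1 < Real.sqrt 3 * u := by
    rw [div_lt_iff₀ hs3] at hu; linarith [mul_comm u (Real.sqrt 3)]
  have hsq3 : Real.sqrt 3 ^ 2 = 3 := Real.sq_sqrt (by norm_num)
  have h3 : 1 < 3 * u ^ 2 := by nlinarith
  have h3ne : 3 * u ^ 2 - 1 ≠ 0 := by linarith
  set a := Real.sqrt (v ^ 2 + 1) with ha_def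
  set b := Real.sqrt (u ^ 2 + 1) with hb_def
  have ha : 0 < a := Real.sqrt_pos.mpr (by positivity)
  have hb : 0 < b := Real.sqrt_pos.mpr (by positivity)
  have ha2 : a ^ 2 = v ^ 2 + 1 := Real.sq_sqrt (by positivity)
  have hb2 : b ^ 2 = u ^ 2 + 1 := Real.sq_sqrt (by positivity)
  rw [div_eq_div_iff (by positivity) (by positivity)]
  constructor
  · intro h
    have hpoly : (u + v) ^ 2 * (u ^ 2 + 1) = 4 * u ^ 2 * (v ^ 2 + 1) := by
      have := congrArg (· ^ 2) h
      simp only [mul_pow] at this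
      nlinarith [this, ha2, hb2]
    have hfac : (v - u) * ((3 * u ^ 2 - 1) * v - u * (3 - u ^ 2)) = 0 := by
      nlinarith [hpoly]
    have hvu : v - u ≠ 0 := sub_ne_zero.mpr (Ne.symm huv)
    have := (mul_eq_zero.mp hfac).resolve_left hvu
    rw [eq_div_iff h3ne]
    linarith
  · intro h
    have hkey : v * (3 * u ^ 2 - 1) = u * (3 - u ^ 2) := by
      rw [h, div_mul_eq_mul_div, mul_div_assoc, div_self h3ne, mul_one]
    have hpoly : (u + v) ^ 2 * (u ^ 2 + 1) = 4 * u ^ 2 * (v ^ 2 + 1) := by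
      nlinarith [hkey]
    have hsq : ((u + v) * b) ^ 2 = (u * (2 * a)) ^ 2 := by
      simp only [mul_pow]; nlinarith [ha2, hb2]
    have h1 : 0 ≤ (u + v) * b := by positivity
    have h2 : 0 ≤ u * (2 * a) := by positivity
    exact (sq_eq_sq₀ h1 h2).mp hsq
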